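/- For all x, y in the augmentation ideal of the algebra of planar forests, the deconcatenation coproduct satisfies Δ̃_↗(x ↗ y) = (x ⊗ 1) ↗ Δ̃_↗(y) and Δ̃_↗(x ↘ y) = (x ⊗ 1) ↘ Δ̃_↗(y), where (x⊗1) ⋆ (a⊗b) := (x ⋆ a) ⊗ b for ⋆ ∈ {↗, ↘}. -/

import Mathlib

open scoped TensorProduct

/-- Planar rooted trees. -/
inductive PTree : Type
  | node : List PTree → PTree

/-- Planar rooted forests. -/
abbrev Forest : Type := List PTree

instance : Monoid Forest where
  mul := fun x y => List.append x y
  one := ([] : List PTree)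
  mul_assoc := List.append_assoc
  one_mul := fun _ => rfl
  mul_one := List.append_nil

/-- The algebra `H` of planar rooted forests. -/
abbrev H : Type := MonoidAlgebra ℚ Forest

/-- The basis element of `H` indexed by a forest. -/
noncomputable def bf (F : Forest) : H := MonoidAlgebra.of ℚ Forest F

/-- Grafting on the left leaf. -/
def graftLeaf (F : Forest) : Forest → Forest
  | [] => F
  | .node c :: rest => .node (graftLeaf F c) :: rest

/-- Grafting on the root. -/
def graftRoot (F : Forest) : Forest → Forest
  | [] => F
  | .node c :: rest => .node (F ++ c) :: rest

/-- The product `↗` extended bilinearly to `H`. -/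
noncomputable def glH : H →ₗ[ℚ] H →ₗ[ℚ] H :=
  Finsupp.lift (H →ₗ[ℚ] H) ℚ Forest (fun F =>
    Finsupp.lift H ℚ Forest (fun G => bf (graftLeaf F G)) ∘ₗ (MonoidAlgebra.coeffLinearEquiv ℚ).toLinearMap) ∘ₗ (MonoidAlgebra.coeffLinearEquiv ℚ).toLinearMap

/-- The product `↘` extended bilinearly to `H`. -/
noncomputable def grH : H →ₗ[ℚ] H →ₗ[ℚ] H :=
  Finsupp.lift (H →ₗ[ℚ] H) ℚ Forest (fun F =>
    Finsupp.lift H ℚ Forest (fun G => bf (graftRoot F G)) ∘ₗ (MonoidAlgebra.coeffLinearEquiv ℚ).toLinearMap) ∘ₗ (MonoidAlgebra.coeffLinearEquiv ℚ).toLinearMap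

/-- The reduced deconcatenation coproduct: `Δ̃_↗(F) = Σ F_1 ⊗ F_2` over the
factorizations `F = F_1·F_2` with both factors nonempty. -/
noncomputable def Δdt : H →ₗ[ℚ] H ⊗[ℚ] H :=
  Finsupp.lift (H ⊗[ℚ] H) ℚ Forest (fun F =>
    ∑ k ∈ Finset.Icc 1 (F.length - 1), bf (F.take k) ⊗ₜ bf (F.drop k)) ∘ₗ (MonoidAlgebra.coeffLinearEquiv ℚ).toLinearMap

noncomputable def gH (g : Forest → Forest → Forest) : H →ₗ[ℚ] H →ₗ[ℚ] H :=
  Finsupp.lift (H →ₗ[ℚ] H) ℚ Forest (fun F =>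
    Finsupp.lift H ℚ Forest (fun G => bf (g F G)) ∘ₗ (MonoidAlgebra.coeffLinearEquiv ℚ).toLinearMap) ∘ₗ (MonoidAlgebra.coeffLinearEquiv ℚ).toLinearMap

lemma lift_single {M : Type*} [AddCommMonoid M] [Module ℚ M] (f : Forest → M) (F : Forest) :
    (Finsupp.lift M ℚ Forest f ∘ₗ (MonoidAlgebra.coeffLinearEquiv ℚ).toLinearMap) (bf F) = f F := by
  change Finsupp.lift M ℚ Forest f (Finsupp.single F (1:ℚ)) = f F
  rw [Finsupp.lift_apply,
    Finsupp.sum_single_index (by simp), one_smul]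

lemma gH_bf (g : Forest → Forest → Forest) (F G : Forest) :
    gH g (bf F) (bf G) = bf (g F G) := by
  rw [gH]
  exact (congrArg (fun L : H →ₗ[ℚ] H => L (bf G))
    (lift_single (M := H →ₗ[ℚ] H) (fun F => Finsupp.lift H ℚ Forest (fun G => bf (g F G)) ∘ₗ (MonoidAlgebra.coeffLinearEquiv ℚ).toLinearMap) F)).trans
    (lift_single (fun G => bf (g F G)) G)

lemma Δdt_bf (F : Forest) :
    Δdt (bf F) = ∑ k ∈ Finset.Icc 1 (F.length - 1), bf (F.take k) ⊗ₜ[ℚ] bf (F.drop k) := by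
  rw [Δdt]
  exact lift_single (fun F => ∑ k ∈ Finset.Icc 1 (F.length - 1), bf (F.take k) ⊗ₜ[ℚ] bf (F.drop k)) F

lemma bf_rep (x : H) : x = ∑ F ∈ x.coeff.support, x.coeff F • bf F := by
  apply MonoidAlgebra.coeff_injective
  rw [MonoidAlgebra.coeff_sum]
  conv_lhs => rw [← Finsupp.sum_single x.coeff]
  rw [Finsupp.sum]
  refine Finset.sum_congr rfl fun F _ => ?_
  simp [bf, MonoidAlgebra.of_apply, Finsupp.smul_single, MonoidAlgebra.coeff_single]

lemma graftLeaf_props (F G : Forest) (hG : G ≠ []) :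
    (graftLeaf F G).length = G.length ∧
    ∀ k, 1 ≤ k → (graftLeaf F G).take k = graftLeaf F (G.take k) ∧
      (graftLeaf F G).drop k = G.drop k := by
  match G with
  | [] => exact absurd rfl hG
  | .node c :: rest =>
    refine ⟨by simp [graftLeaf], fun k hk => ?_⟩
    match k with
    | k + 1 => simp [graftLeaf]

lemma graftRoot_props (F G : Forest) (hG : G ≠ []) :
    (graftRoot F G).length = G.length ∧
    ∀ k, 1 ≤ k → (graftRoot F G).take k = graftRoot F (G.take k) ∧
      (graftRoot F G).drop k = G.drop k := by
  match G with
  | [] => exact absurd rfl hG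
  | .node c :: rest =>
    refine ⟨by simp [graftRoot], fun k hk => ?_⟩
    match k with
    | k + 1 => simp [graftRoot]

lemma key_basis (g : Forest → Forest → Forest)
    (hg : ∀ F G, G ≠ [] → (g F G).length = G.length ∧
      ∀ k, 1 ≤ k → (g F G).take k = g F (G.take k) ∧ (g F G).drop k = G.drop k)
    (F G : Forest) (hG : G ≠ []) :
    Δdt (bf (g F G)) = ∑ k ∈ Finset.Icc 1 (G.length - 1),
      bf (g F (G.take k)) ⊗ₜ[ℚ] bf (G.drop k) := by
  obtain ⟨hlen, htd⟩ := hg F G hG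
  rw [Δdt_bf, hlen]
  refine Finset.sum_congr rfl fun k hk => ?_
  obtain ⟨hk1, _⟩ := Finset.mem_Icc.mp hk
  rw [(htd k hk1).1, (htd k hk1).2]

lemma key_x (g : Forest → Forest → Forest)
    (hg : ∀ F G, G ≠ [] → (g F G).length = G.length ∧
      ∀ k, 1 ≤ k → (g F G).take k = g F (G.take k) ∧ (g F G).drop k = G.drop k)
    (x : H) (G : Forest) (hG : G ≠ []) :
    Δdt (gH g x (bf G)) = LinearMap.rTensor H (gH g x) (Δdt (bf G)) := by
  rw [Δdt_bf, map_sum]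
  conv_lhs => rw [bf_rep x]
  simp only [map_sum, LinearMap.sum_apply, LinearMap.smul_apply, map_smul, gH_bf,
    key_basis g hg _ G hG, Finset.smul_sum]
  rw [Finset.sum_comm]
  refine Finset.sum_congr rfl fun k _ => ?_
  rw [LinearMap.rTensor_tmul]
  conv_rhs => rw [bf_rep x]
  simp only [map_sum, LinearMap.sum_apply, LinearMap.smul_apply, map_smul, gH_bf,
    TensorProduct.sum_tmul, TensorProduct.smul_tmul']

lemma key_main (g : Forest → Forest → Forest)
    (hg : ∀ F G, G ≠ [] → (g F G).length = G.length ∧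
      ∀ k, 1 ≤ k → (g F G).take k = g F (G.take k) ∧ (g F G).drop k = G.drop k)
    (x y : H) (hy : y.coeff (1 : Forest) = 0) :
    Δdt (gH g x y) = LinearMap.rTensor H (gH g x) (Δdt y) := by
  conv_lhs => rw [bf_rep y]
  conv_rhs => rw [bf_rep y]
  simp only [map_sum, map_smul]
  refine Finset.sum_congr rfl fun G hG => ?_
  have hGne : G ≠ [] := by
    rintro rfl
    exact Finsupp.mem_support_iff.mp hG hy
  rw [key_x g hg x G hGne]

lemma glH_eq : glH = gH graftLeaf := rfl
lemma grH_eq : grH = gH graftRoot := rfl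

/-- For all `x, y` in the augmentation ideal of the algebra of planar forests:
`Δ̃_↗(x ↗ y) = (x ⊗ 1) ↗ Δ̃_↗(y)` and `Δ̃_↗(x ↘ y) = (x ⊗ 1) ↘ Δ̃_↗(y)`,
where `(x⊗1) ⋆ (a⊗b) = (x ⋆ a) ⊗ b`. -/
theorem reduced_deconcatenation_graft (x y : H)
    (hx : x.coeff (1 : Forest) = 0) (hy : y.coeff (1 : Forest) = 0) :
    Δdt (glH x y) = (LinearMap.rTensor H (glH x)) (Δdt y) ∧
    Δdt (grH x y) = (LinearMap.rTensor H (grH x)) (Δdt y) := by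
  rw [glH_eq, grH_eq]
  exact ⟨key_main graftLeaf graftLeaf_props x y hy, key_main graftRoot graftRoot_props x y hy⟩
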